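/- Suppose for i,j ∈ {1,2,3}, δ_ij ∈ (0,1) and nonzero complex numbers k̂_ij satisfy δ_ij² = 1 - |k̂_ij|². Then |1 - |k̂_21 k̂_13/k̂_23|| ≤ δ_12 δ_13 holds if and only if 1/|k̂_12|² + 1/|k̂_23|² + 1/|k̂_13|² - 1 ≤ 2/(|k̂_12||k̂_23||k̂_13|). -/

import Mathlib

/-- Given `δ_ij ∈ (0,1)` and nonzero `k̂_ij` with `δ_ij² = 1 - |k̂_ij|²` (and
`|k̂₂₁| = |k̂₁₂|`), the inequality `|1 - |k̂₂₁k̂₁₃/k̂₂₃|| ≤ δ₁₂δ₁₃` is equivalent to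
`1/|k̂₁₂|² + 1/|k̂₂₃|² + 1/|k̂₁₃|² - 1 ≤ 2/(|k̂₁₂||k̂₂₃||k̂₁₃|)`. -/
theorem gram_ineq_iff (δ12 δ13 δ23 : ℝ) (k12 k21 k13 k23 : ℂ)
    (h12 : 0 < δ12) (h12' : δ12 < 1) (h13 : 0 < δ13) (h13' : δ13 < 1)
    (h23 : 0 < δ23) (h23' : δ23 < 1)
    (hk12 : k12 ≠ 0) (hk21 : k21 ≠ 0) (hk13 : k13 ≠ 0) (hk23 : k23 ≠ 0)
    (hsym : ‖k21‖ = ‖k12‖)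
    (e12 : δ12 ^ 2 = 1 - (‖k12‖) ^ 2)
    (e13 : δ13 ^ 2 = 1 - (‖k13‖) ^ 2)
    (e23 : δ23 ^ 2 = 1 - (‖k23‖) ^ 2) :
    |1 - ‖k21 * k13 / k23‖| ≤ δ12 * δ13 ↔
      1 / (‖k12‖) ^ 2 + 1 / (‖k23‖) ^ 2 + 1 / (‖k13‖) ^ 2 - 1 ≤
        2 / (‖k12‖ * ‖k23‖ * ‖k13‖) := by
  set a := ‖k12‖ with ha'
  set b := ‖k23‖ with hb'
  set c := ‖k13‖ with hc'
  have ha : 0 < a := norm_pos_iff.mpr hk12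
  have hb : 0 < b := norm_pos_iff.mpr hk23
  have hc : 0 < c := norm_pos_iff.mpr hk13
  have habs : ‖k21 * k13 / k23‖ = a * c / b := by
    rw [norm_div, norm_mul, hsym]
  rw [habs]
  have hd : 0 ≤ δ12 * δ13 := by positivity
  have key : |1 - a * c / b| ≤ δ12 * δ13 ↔
      (b - a * c) ^ 2 ≤ b ^ 2 * ((1 - a ^ 2) * (1 - c ^ 2)) := by
    have hsq : (δ12 * δ13 * b) ^ 2 = b ^ 2 * ((1 - a ^ 2) * (1 - c ^ 2)) := by
      rw [mul_pow, mul_pow, e12, e13]; ring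
    rw [show (1 : ℝ) - a * c / b = (b - a * c) / b by field_simp,
      abs_div, abs_of_pos hb, div_le_iff₀ hb]
    constructor
    · intro h
      have h2 : |b - a * c| ^ 2 ≤ (δ12 * δ13 * b) ^ 2 :=
        pow_le_pow_left₀ (abs_nonneg _) h 2
      rw [sq_abs] at h2
      linarith [h2, hsq]
    · intro h
      have h2 : |b - a * c| ^ 2 ≤ (δ12 * δ13 * b) ^ 2 := by
        rw [sq_abs, hsq]; exact h
      have h3 := abs_nonneg (b - a * c)
      have h4 : 0 ≤ δ12 * δ13 * b := mul_nonneg hd hb.le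
      nlinarith [h2, h3, h4, sq_nonneg (|b - a * c| - δ12 * δ13 * b),
        sq_nonneg (|b - a * c| + δ12 * δ13 * b)]
  rw [key]
  have h1 : 1 / a ^ 2 + 1 / b ^ 2 + 1 / c ^ 2 - 1 =
      (b ^ 2 * c ^ 2 + a ^ 2 * c ^ 2 + a ^ 2 * b ^ 2 - a ^ 2 * b ^ 2 * c ^ 2)
        / (a ^ 2 * b ^ 2 * c ^ 2) := by
    field_simp
  have h2 : 2 / (a * b * c) = 2 * (a * b * c) / (a ^ 2 * b ^ 2 * c ^ 2) := by
    field_simp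
  rw [h1, h2, div_le_div_iff_of_pos_right (by positivity)]
  have e : b ^ 2 * ((1 - a ^ 2) * (1 - c ^ 2)) - (b - a * c) ^ 2 =
      2 * (a * b * c) -
        (b ^ 2 * c ^ 2 + a ^ 2 * c ^ 2 + a ^ 2 * b ^ 2 - a ^ 2 * b ^ 2 * c ^ 2) := by
    ring
  constructor <;> intro h <;> linarith [e]
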